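/- Let A act transitively on Ω, G ⊴ A transitive, A/G cyclic generated by xG, and suppose the number r_2 of common (A,G)-orbits on ordered pairs of distinct points equals 1. Choose (a,b) in this common orbit, let A_{a,b} be the stabilizer of both a and b in A, and let r be the number of orbits of A_{a,b} on Ω. Then r_3 + 2 ≤ r, where r_3 is the number of common (A,G)-orbits on ordered triples of distinct points. -/

import Mathlib

open MulAction
open scoped Classical

/-- The number `r_k` of common `(A,G)`-orbits on `Ω^(k)`, the set of `k`-tuples of
pairwise distinct elements of `Ω` with the componentwise action. -/
noncomputable def commonTupleOrbits (A Ω : Type*) [Group A] [MulAction A Ω]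
    (G : Subgroup A) (k : ℕ) : ℕ :=
  Set.ncard {O : Set (Fin k → Ω) | ∃ f : Fin k → Ω, Function.Injective f ∧
    O = MulAction.orbit A f ∧ O = MulAction.orbit G f}

lemma inj2 {Ω : Type*} {p q : Ω} (h : p ≠ q) : Function.Injective ![p, q] := by
  intro i j hij
  fin_cases i <;> fin_cases j <;> simp_all

lemma pair_orbit_key {A Ω : Type*} [Group A] [MulAction A Ω] (G : Subgroup A)
    (hr2 : commonTupleOrbits A Ω G 2 = 1) (a b : Ω) (hab : a ≠ b)
    (hcommon : orbit A ((a, b) : Ω × Ω) = orbit G ((a, b) : Ω × Ω))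
    (f : Fin 3 → Ω) (hf : Function.Injective f) (hfo : orbit A f = orbit G f) :
    ∃ g : A, g • f 0 = a ∧ g • f 1 = b := by
  classical
  set u : Fin 2 → Ω := ![f 0, f 1] with hu
  set v : Fin 2 → Ω := ![a, b] with hv
  have hu_inj : Function.Injective u := inj2 (fun h => by simpa using hf h)
  have hv_inj : Function.Injective v := inj2 hab
  have hu_common : orbit A u = orbit G u := by
    apply le_antisymm
    · rintro _ ⟨g, rfl⟩
      have hm : g • f ∈ orbit (↥G) f := by rw [← hfo]; exact mem_orbit f g
      obtain ⟨h, hh⟩ := hm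
      have hh' : ∀ i, (h : A) • f i = g • f i := fun i => by
        have h2 : (h • f) i = (g • f) i := congrFun hh i
        exact h2
      refine ⟨h, ?_⟩
      funext i
      fin_cases i <;> simp only [hu, Pi.smul_apply, Matrix.cons_val_zero,
        Matrix.cons_val_one, Matrix.head_cons] <;> first | exact hh' 0 | exact hh' 1
    · rintro _ ⟨h, rfl⟩
      exact mem_orbit u (h : A)
  have hv_common : orbit A v = orbit G v := by
    apply le_antisymm
    · rintro _ ⟨g, rfl⟩
      have : g • ((a, b) : Ω × Ω) ∈ orbit G ((a, b) : Ω × Ω) :=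
        hcommon ▸ mem_orbit _ g
      obtain ⟨h, hh⟩ := this
      have h1 : (h : A) • a = g • a := congrArg Prod.fst hh
      have h2 : (h : A) • b = g • b := congrArg Prod.snd hh
      refine ⟨h, ?_⟩
      funext i
      fin_cases i <;> simp only [hv, Pi.smul_apply, Matrix.cons_val_zero,
        Matrix.cons_val_one, Matrix.head_cons] <;> first | exact h1 | exact h2
    · rintro _ ⟨h, rfl⟩
      exact mem_orbit v (h : A)
  obtain ⟨w, hw⟩ := Set.ncard_eq_one.mp hr2
  have hmemu : orbit A u ∈ {O : Set (Fin 2 → Ω) | ∃ f : Fin 2 → Ω, Function.Injective f ∧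
      O = orbit A f ∧ O = orbit G f} := ⟨u, hu_inj, rfl, hu_common⟩
  have hmemv : orbit A v ∈ {O : Set (Fin 2 → Ω) | ∃ f : Fin 2 → Ω, Function.Injective f ∧
      O = orbit A f ∧ O = orbit G f} := ⟨v, hv_inj, rfl, hv_common⟩
  rw [hw] at hmemu hmemv
  have heq : orbit A u = orbit A v := by
    rw [Set.mem_singleton_iff.mp hmemu, Set.mem_singleton_iff.mp hmemv]
  have : v ∈ orbit A u := heq ▸ mem_orbit_self v
  obtain ⟨g, hg⟩ := this
  refine ⟨g, ?_, ?_⟩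
  · have := congrFun hg 0; simpa [hu, hv] using this
  · have := congrFun hg 1; simpa [hu, hv] using this

/-- if `r_2 = 1` and `(a,b)` lies in the common `(A,G)`-orbit of
distinct pairs, then `r_3 + 2 ≤ r`, where `r` is the number of orbits of the
two-point stabilizer `A_{a,b}` on `Ω`. -/
theorem common_triple_orbits_add_two_le_two_point_stabilizer_orbits
    (A Ω : Type*) [Group A] [Fintype A] [Fintype Ω] [MulAction A Ω]
    [MulAction.IsPretransitive A Ω]
    (G : Subgroup A) [G.Normal] [MulAction.IsPretransitive G Ω] (x : A)
    (hgen : ∀ a : A, ∃ k : ℤ,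
      (QuotientGroup.mk a : A ⧸ G) = (QuotientGroup.mk x : A ⧸ G) ^ k)
    (hr2 : commonTupleOrbits A Ω G 2 = 1)
    (a b : Ω) (hab : a ≠ b)
    (hcommon : MulAction.orbit A ((a, b) : Ω × Ω) = MulAction.orbit G ((a, b) : Ω × Ω)) :
    commonTupleOrbits A Ω G 3 + 2 ≤
      Nat.card (orbitRel.Quotient
        (↥(MulAction.stabilizer A a ⊓ MulAction.stabilizer A b)) Ω) := by
  classical
  set H := MulAction.stabilizer A a ⊓ MulAction.stabilizer A b with hH
  have hHa : ∀ h : H, (h : A) • a = a := fun h => (Subgroup.mem_inf.mp h.2).1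
  have hHb : ∀ h : H, (h : A) • b = b := fun h => (Subgroup.mem_inf.mp h.2).2
  set S := {O : Set (Fin 3 → Ω) | ∃ f : Fin 3 → Ω, Function.Injective f ∧
      O = orbit A f ∧ O = orbit G f} with hS
  -- key: each common triple orbit is orbit A ![a,b,c] for some c ∉ {a,b}
  have key : ∀ O : S, ∃ c : Ω, c ≠ a ∧ c ≠ b ∧ (O : Set (Fin 3 → Ω)) = orbit A ![a, b, c] := by
    rintro ⟨O, f, hf, hOA, hOG⟩
    obtain ⟨g, hg0, hg1⟩ := pair_orbit_key G hr2 a b hab hcommon f hf (hOA.symm.trans hOG)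
    refine ⟨g • f 2, ?_, ?_, ?_⟩
    · intro h
      rw [← hg0] at h
      exact absurd (hf (MulAction.injective g h)) (by decide)
    · intro h
      rw [← hg1] at h
      exact absurd (hf (MulAction.injective g h)) (by decide)
    · have h1 : g • f = ![a, b, g • f 2] := by
        funext i
        fin_cases i <;> simp [hg0, hg1]
      show O = orbit A ![a, b, g • f 2]
      rw [hOA, ← h1, orbit_smul]
  -- the injection into the quotient
  set Q := orbitRel.Quotient (↥H) Ω with hQ
  let ψ : S → Q := fun O => Quotient.mk'' (key O).choose
  have ψspec : ∀ O : S, (key O).choose ≠ a ∧ (key O).choose ≠ b ∧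
      (O : Set (Fin 3 → Ω)) = orbit A ![a, b, (key O).choose] := fun O => (key O).choose_spec
  have hψinj : Function.Injective ψ := by
    intro O₁ O₂ h
    have hrel : (key O₁).choose ∈ orbit (↥H) (key O₂).choose := by
      rw [← MulAction.orbitRel_apply]
      exact Quotient.eq''.mp h
    obtain ⟨hh, hhc⟩ := hrel
    have htr : ![a, b, (key O₁).choose] = (hh : A) • ![a, b, (key O₂).choose] := by
      funext i
      fin_cases i <;>
        simp only [Pi.smul_apply, Matrix.cons_val_zero, Matrix.cons_val_one,
          Matrix.head_cons, Matrix.cons_val_two, Matrix.tail_cons]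
      · exact (hHa hh).symm
      · exact (hHb hh).symm
      · exact hhc.symm
    have : orbit A ![a, b, (key O₁).choose] = orbit A ![a, b, (key O₂).choose] := by
      rw [htr, orbit_smul]
    exact Subtype.ext (((ψspec O₁).2.2.trans this).trans (ψspec O₂).2.2.symm)
  -- orbit under H of a is {a}, similarly b
  have horb_a : ∀ c : Ω, (Quotient.mk'' c : Q) = Quotient.mk'' a → c = a := by
    intro c hc
    have : a ∈ orbit (↥H) c := by
      rw [← MulAction.orbitRel_apply]; exact Quotient.eq''.mp hc.symm
    obtain ⟨hh, hhc⟩ := this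
    have : c ∈ orbit (↥H) a := by
      rw [← MulAction.orbitRel_apply]; exact Quotient.eq''.mp hc
    obtain ⟨hh', hhc'⟩ := this
    rw [← hhc']; exact hHa hh'
  have horb_b : ∀ c : Ω, (Quotient.mk'' c : Q) = Quotient.mk'' b → c = b := by
    intro c hc
    have : c ∈ orbit (↥H) b := by
      rw [← MulAction.orbitRel_apply]; exact Quotient.eq''.mp hc
    obtain ⟨hh', hhc'⟩ := this
    rw [← hhc']; exact hHb hh'
  -- build total injection
  let F : Option (Option S) → Q := fun o =>
    match o with
    | none => Quotient.mk'' a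
    | some none => Quotient.mk'' b
    | some (some O) => ψ O
  have hFinj : Function.Injective F := by
    rintro (_ | _ | O₁) (_ | _ | O₂) h <;> simp only [F] at h
    · rfl
    · exact absurd (horb_b a h) hab
    · exact absurd (horb_a (key O₂).choose h.symm) (ψspec O₂).1
    · exact absurd (horb_a b h) (Ne.symm hab)
    · rfl
    · exact absurd (horb_b (key O₂).choose h.symm) (ψspec O₂).2.1
    · exact absurd (horb_a (key O₁).choose h) (ψspec O₁).1
    · exact absurd (horb_b (key O₁).choose h) (ψspec O₁).2.1
    · rw [hψinj h]
  have hcard : Nat.card (Option (Option S)) ≤ Nat.card Q :=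
    Nat.card_le_card_of_injective F hFinj
  have hS_fin : Finite S := by infer_instance
  rw [Finite.card_option, Finite.card_option] at hcard
  have : commonTupleOrbits A Ω G 3 = Nat.card S := (Nat.card_coe_set_eq S).symm
  rw [commonTupleOrbits] at this ⊢
  omega
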